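/- Let P be an N×N stochastic matrix that is an inverse M-matrix. Then there exist a real number ε with 0 ≤ ε < 1 and an N×N stochastic matrix H such that P = (1−ε) · (I − ε·H)^{−1}. -/

import Mathlib

open Matrix

/-- A real square matrix is (entrywise) nonnegative if all of its entries are nonnegative. -/
def IsNonnegMatrix {ι : Type*} (B : Matrix ι ι ℝ) : Prop :=
  ∀ i j, 0 ≤ B i j

/-- A Z-matrix is a real square matrix all of whose off-diagonal entries are nonpositive. -/
def IsZMatrix {ι : Type*} (Q : Matrix ι ι ℝ) : Prop :=
  ∀ i j, i ≠ j → Q i j ≤ 0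

/-- A nonnegative matrix `B` is infinitely divisible if for every positive integer `n`
there exists a nonnegative matrix `K` with `K ^ n = B`. -/
def IsInfinitelyDivisible {ι : Type*} [Fintype ι] [DecidableEq ι] (B : Matrix ι ι ℝ) : Prop :=
  ∀ n : ℕ, 0 < n → ∃ K : Matrix ι ι ℝ, IsNonnegMatrix K ∧ K ^ n = B

/-- `B` is strongly infinitely divisible if it is infinitely divisible and `det B > 0`. -/
def IsStronglyInfinitelyDivisible {ι : Type*} [Fintype ι] [DecidableEq ι]
    (B : Matrix ι ι ℝ) : Prop :=
  IsInfinitelyDivisible B ∧ 0 < B.det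

/-- An inverse M-matrix is an invertible nonnegative matrix whose inverse is a Z-matrix. -/
def IsInverseMMatrix {ι : Type*} [Fintype ι] [DecidableEq ι] (K : Matrix ι ι ℝ) : Prop :=
  IsUnit K.det ∧ IsNonnegMatrix K ∧ IsZMatrix K⁻¹

/-- A stochastic matrix is a nonnegative square matrix each of whose rows sums to `1`. -/
def IsStochasticMatrix {ι : Type*} [Fintype ι] (P : Matrix ι ι ℝ) : Prop :=
  IsNonnegMatrix P ∧ ∀ i, ∑ j, P i j = 1

/-- An intensity matrix is a real square matrix whose off-diagonal entries are nonnegative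
and each of whose rows sums to `0`. -/
def IsIntensityMatrix {ι : Type*} [Fintype ι] (R : Matrix ι ι ℝ) : Prop :=
  (∀ i j, i ≠ j → 0 ≤ R i j) ∧ ∀ i, ∑ j, R i j = 0

theorem stmt18 (N : ℕ) (P : Matrix (Fin N) (Fin N) ℝ) (hP : IsStochasticMatrix P)
    (hPM : IsInverseMMatrix P) :
    ∃ ε : ℝ, 0 ≤ ε ∧ ε < 1 ∧ ∃ H : Matrix (Fin N) (Fin N) ℝ, IsStochasticMatrix H ∧
      P = (1 - ε) • (1 - ε • H)⁻¹ := by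
  obtain ⟨hPnn, hProw⟩ := hP
  obtain ⟨hdet, -, hZ⟩ := hPM
  set Q := P⁻¹ with hQdef
  have hQP : Q * P = 1 := Matrix.nonsing_inv_mul P hdet
  have hQrow : ∀ i, ∑ j, Q i j = 1 := by
    intro i
    have h1 : ∑ j, Q i j = ∑ k, (Q * P) i k := by
      simp only [Matrix.mul_apply]
      rw [Finset.sum_comm]
      refine Finset.sum_congr rfl fun j _ => ?_
      rw [← Finset.mul_sum, hProw, mul_one]
    rw [h1, hQP]
    simp [Matrix.one_apply]
  set M : ℝ := 2 + ∑ i, |Q i i| with hMdef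
  have habs : 0 ≤ ∑ i, |Q i i| := Finset.sum_nonneg fun i _ => abs_nonneg _
  have hM2 : 2 ≤ M := by simp [hMdef]; linarith
  have hM1 : 1 < M := by linarith
  have hM0 : 0 < M := by linarith
  have hMne : M ≠ 0 := ne_of_gt hM0
  have hM1ne : M - 1 ≠ 0 := by intro h; linarith [sub_eq_zero.mp h]
  have hM1pos : 0 < M - 1 := by linarith
  have hQd : ∀ i, Q i i ≤ M := by
    intro i
    have h1 : |Q i i| ≤ ∑ j, |Q j j| :=
      Finset.single_le_sum (f := fun j => |Q j j|) (fun j _ => abs_nonneg _) (Finset.mem_univ i)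
    have h2 := le_abs_self (Q i i)
    simp only [hMdef]
    linarith
  refine ⟨1 - 1/M, by
    rw [sub_nonneg, div_le_one hM0]; linarith, by
    have : 0 < 1/M := by positivity
    linarith, (M/(M-1)) • ((1 : Matrix (Fin N) (Fin N) ℝ) - (1/M) • Q), ⟨?_, ?_⟩, ?_⟩
  · -- nonneg
    intro i j
    simp only [Matrix.smul_apply, Matrix.sub_apply, smul_eq_mul]
    rcases eq_or_ne i j with rfl | hij
    · have h1 : (1 : Matrix (Fin N) (Fin N) ℝ) i i = 1 := Matrix.one_apply_eq i
      rw [h1]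
      have := hQd i
      have h2 : 0 ≤ 1 - 1/M * Q i i := by
        rw [sub_nonneg, div_mul_eq_mul_div, one_mul, div_le_one hM0]
        exact this
      have h3 : 0 ≤ M/(M-1) := by positivity
      nlinarith
    · have h1 : (1 : Matrix (Fin N) (Fin N) ℝ) i j = 0 := Matrix.one_apply_ne hij
      rw [h1]
      have h2 : Q i j ≤ 0 := hZ i j hij
      have h3 : 0 ≤ M/(M-1) := by positivity
      have h4 : 0 ≤ -(1/M * Q i j) := by
        have : 0 ≤ 1/M := by positivity
        nlinarith
      nlinarith
  · -- row sums
    intro i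
    simp only [Matrix.smul_apply, Matrix.sub_apply, smul_eq_mul]
    rw [← Finset.mul_sum, Finset.sum_sub_distrib, ← Finset.mul_sum, hQrow]
    have h1 : ∑ j, (1 : Matrix (Fin N) (Fin N) ℝ) i j = 1 := by
      simp [Matrix.one_apply]
    rw [h1]
    field_simp
  · -- main equation
    have key : (1 : Matrix (Fin N) (Fin N) ℝ) - (1 - 1/M) • ((M/(M-1)) •
        ((1 : Matrix (Fin N) (Fin N) ℝ) - (1/M) • Q)) = (1/M) • Q := by
      rw [smul_smul]
      have hc : (1 - 1/M) * (M/(M-1)) = 1 := by field_simp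
      rw [hc, one_smul]
      abel
    rw [key]
    have hinv : ((1/M) • Q)⁻¹ = M • P := by
      apply Matrix.inv_eq_right_inv
      rw [Matrix.smul_mul, Matrix.mul_smul, hQP, smul_smul]
      norm_num [hMne]
    rw [hinv, smul_smul]
    have hc2 : (1 - (1 - 1/M)) * M = 1 := by field_simp; ring
    rw [hc2, one_smul]
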